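/- Suppose a degree-zero right connection ∇→ satisfies the undeformed †-bimodule condition ∇→(ω) = −σ∘†₂∘∇→(ω*) for all homogeneous ω (with σ the flip and †₂(ρ⊗η)=η*⊗ρ*). Then the deformed connection ∇→_θ = T_θ∘∇→ satisfies the deformed condition ∇→_θ(ω) = −σ_θ ∘ †_{1⊗_θ1} ∘ ∇→_θ(ω†) for all homogeneous ω, where σ_θ = T_θ∘σ∘T_θ^{−1} and ω† = λ^{n₁(ω)n₂(ω)}ω*. -/

import Mathlib

/-- Suppose a degree-zero right connection `∇→` satisfies the undeformed
†-bimodule condition `∇→(ω) = −σ(†₂(∇→(ω*)))` on homogeneous `ω`, where `σ` is the flip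
and `†₂(ρ⊗η) = η*⊗ρ*`. Then the deformed connection `∇→_θ = T_θ∘∇→` satisfies the
deformed condition `∇→_θ(ω) = −σ_θ(†_{1⊗_θ1}(∇→_θ(ω†)))` with `σ_θ = T_θ∘σ∘T_θ⁻¹` and
`ω† = λ^{n₁(ω)n₂(ω)}ω*`. -/
theorem stmt_18 {Ω T Tθ : Type*}
    [AddCommGroup Ω] [Module ℂ Ω] [AddCommGroup T] [Module ℂ T] [AddCommGroup Tθ] [Module ℂ Tθ]
    (l : ℂ) (hl : ‖l‖ = 1)
    (Gr : ℤ × ℤ → Submodule ℂ Ω)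
    (starΩ : Ω → Ω)
    (hstarGr : ∀ n : ℤ × ℤ, ∀ ω ∈ Gr n, starΩ ω ∈ Gr (-n))
    (t : Ω → Ω → T) (tθ : Ω → Ω → Tθ)
    (Tmap : T → Tθ)
    (hTmap_add : ∀ v w : T, Tmap (v + w) = Tmap v + Tmap w)
    (hTmap_s : ∀ (c : ℂ) (v : T), Tmap (c • v) = c • Tmap v)
    (hTmap_t : ∀ (m n : ℤ × ℤ) (ω η : Ω), ω ∈ Gr m → η ∈ Gr n →
      Tmap (t ω η) = l ^ (-(m.2 * n.1)) • tθ ω η)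
    (σ : T → T)
    (hσ_add : ∀ v w : T, σ (v + w) = σ v + σ w)
    (hσ_t : ∀ ω η : Ω, σ (t ω η) = t η ω)
    (dag2 : T → T)
    (hdag2_add : ∀ v w : T, dag2 (v + w) = dag2 v + dag2 w)
    (hdag2_t : ∀ ω η : Ω, dag2 (t ω η) = t (starΩ η) (starΩ ω))
    (σθ : Tθ → Tθ)
    (hσθ : ∀ v : T, σθ (Tmap v) = Tmap (σ v))
    (dag1θ : Tθ → Tθ)
    (hdag1θ_add : ∀ v w : Tθ, dag1θ (v + w) = dag1θ v + dag1θ w)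
    (hdag1θ_s : ∀ (c : ℂ) (v : Tθ), dag1θ (c • v) = (starRingEnd ℂ) c • dag1θ v)
    (hdag1θ_t : ∀ (m n : ℤ × ℤ) (ω η : Ω), ω ∈ Gr m → η ∈ Gr n →
      dag1θ (tθ ω η) = l ^ (n.1 * n.2) • l ^ (m.1 * m.2) • tθ (starΩ η) (starΩ ω))
    (covr : Ω → T)
    (hcovr_s : ∀ (c : ℂ) (ω : Ω), covr (c • ω) = c • covr ω)
    (hcovr_hom : ∀ (n : ℤ × ℤ) (ω : Ω), ω ∈ Gr n →
      ∃ (k : ℕ) (α β : Fin k → Ω) (d e : Fin k → ℤ × ℤ),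
        (∀ i, α i ∈ Gr (d i)) ∧ (∀ i, β i ∈ Gr (e i)) ∧ (∀ i, d i + e i = n) ∧
        covr ω = ∑ i, t (α i) (β i))
    (hbimod : ∀ (n : ℤ × ℤ) (ω : Ω), ω ∈ Gr n → covr ω = - σ (dag2 (covr (starΩ ω)))) :
    ∀ (n : ℤ × ℤ) (ω : Ω), ω ∈ Gr n →
      Tmap (covr ω) = - σθ (dag1θ (Tmap (covr (l ^ (n.1 * n.2) • starΩ ω)))) := by

  intro n ω hω
  have hl0 : l ≠ 0 := by
    intro h
    rw [h] at hl
    simp at hl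
  have hconj : ∀ k : ℤ, (starRingEnd ℂ) (l ^ k) = l ^ (-k) := by
    intro k
    have h1 : l * (starRingEnd ℂ) l = 1 := by
      rw [Complex.mul_conj]
      norm_cast
      rw [Complex.normSq_eq_norm_sq, hl]
      norm_num
    have h2 : (starRingEnd ℂ) l = l⁻¹ := (inv_eq_of_mul_eq_one_right h1).symm
    rw [map_zpow₀, h2, inv_zpow, ← zpow_neg]
  obtain ⟨k, α, β, d, e, hα, hβ, hde, hsum⟩ :=
    hcovr_hom (-n) (starΩ ω) (hstarGr n ω hω)
  have hTmap_sum : ∀ (f : Fin k → T), Tmap (∑ i, f i) = ∑ i, Tmap (f i) :=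
    fun f => map_sum (AddMonoidHom.mk' Tmap hTmap_add) f Finset.univ
  have hdag1θ_sum : ∀ (f : Fin k → Tθ), dag1θ (∑ i, f i) = ∑ i, dag1θ (f i) :=
    fun f => map_sum (AddMonoidHom.mk' dag1θ hdag1θ_add) f Finset.univ
  have hdag2_sum : ∀ (f : Fin k → T), dag2 (∑ i, f i) = ∑ i, dag2 (f i) :=
    fun f => map_sum (AddMonoidHom.mk' dag2 hdag2_add) f Finset.univ
  have hTmap_neg : ∀ v : T, Tmap (-v) = - Tmap v :=
    fun v => map_neg (AddMonoidHom.mk' Tmap hTmap_add) v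
  have key : ∀ i, dag1θ (l ^ (n.1 * n.2) • l ^ (-((d i).2 * (e i).1)) • tθ (α i) (β i))
      = Tmap (t (starΩ (β i)) (starΩ (α i))) := by
    intro i
    have hd1 := congrArg Prod.fst (hde i)
    have hd2 := congrArg Prod.snd (hde i)
    simp only [Prod.fst_add, Prod.snd_add, Prod.fst_neg, Prod.snd_neg] at hd1 hd2
    rw [hdag1θ_s, hdag1θ_s, hdag1θ_t (d i) (e i) _ _ (hα i) (hβ i),
      hconj, hconj, neg_neg,
      hTmap_t (-(e i)) (-(d i)) _ _ (hstarGr _ _ (hβ i)) (hstarGr _ _ (hα i))]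
    simp only [Prod.fst_neg, Prod.snd_neg, neg_mul_neg]
    simp only [smul_smul]
    rw [← zpow_add₀ hl0, ← zpow_add₀ hl0, ← zpow_add₀ hl0]
    congr 1
    rw [show (d i).1 = -n.1 - (e i).1 by linarith, show (d i).2 = -n.2 - (e i).2 by linarith]
    ring
  have hA : Tmap (covr (l ^ (n.1 * n.2) • starΩ ω))
      = ∑ i, l ^ (n.1 * n.2) • l ^ (-((d i).2 * (e i).1)) • tθ (α i) (β i) := by
    rw [hcovr_s, hTmap_s, hsum, hTmap_sum, Finset.smul_sum]
    refine Finset.sum_congr rfl fun i _ => ?_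
    rw [hTmap_t (d i) (e i) _ _ (hα i) (hβ i)]
  have hB : dag1θ (Tmap (covr (l ^ (n.1 * n.2) • starΩ ω)))
      = Tmap (dag2 (covr (starΩ ω))) := by
    rw [hA, hdag1θ_sum]
    rw [Finset.sum_congr rfl fun i _ => key i, ← hTmap_sum]
    congr 1
    rw [hsum, hdag2_sum]
    exact Finset.sum_congr rfl fun i _ => (hdag2_t _ _).symm
  have hσval : σ (dag2 (covr (starΩ ω))) = - covr ω := by
    have h := hbimod n ω hω
    rw [h, neg_neg]
  rw [hB, hσθ, hσval, hTmap_neg, neg_neg]
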